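/- There is no centrally symmetric 3-dimensional polytope with exactly 6 vertices and exactly 6 facets. Equivalently, if P ⊂ ℝ³ is a 3-polytope with −P = P and f₀(P) = 6, then P is simplicial and hence f₂(P) = 8 ≠ 6. -/

import Mathlib

open scoped BigOperators

/-- `P` is a 3-dimensional polytope in `ℝ³`: the convex hull of finitely many
points whose affine hull is 3-dimensional. -/
def IsPolytope3 (P : Set (Fin 3 → ℝ)) : Prop :=
  (∃ V : Finset (Fin 3 → ℝ), P = convexHull ℝ (V : Set (Fin 3 → ℝ))) ∧
    Module.finrank ℝ (vectorSpan ℝ P) = 3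

/-- `F` is a (proper, nonempty) face of `P`: the intersection of `P` with a
supporting hyperplane, excluding `∅` and `P` itself. -/
def IsFace (P F : Set (Fin 3 → ℝ)) : Prop :=
  ∃ (a : Fin 3 → ℝ) (b : ℝ),
    (∀ x ∈ P, ∑ i, a i * x i ≤ b) ∧
    F = {x ∈ P | ∑ i, a i * x i = b} ∧ F ≠ ∅ ∧ F ≠ P

/-- dimension of a face. -/
noncomputable def faceDim (F : Set (Fin 3 → ℝ)) : ℕ :=
  Module.finrank ℝ (vectorSpan ℝ F)

/-- `fVec P i` is the number of `i`-dimensional faces of `P`. -/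
noncomputable def fVec (P : Set (Fin 3 → ℝ)) (i : ℕ) : ℕ :=
  Set.ncard {F | IsFace P F ∧ faceDim F = i}

abbrev E3 := Fin 3 → ℝ

def IsFaceL (P F : Set E3) : Prop :=
  ∃ (f : E3 →ₗ[ℝ] ℝ) (b : ℝ),
    (∀ x ∈ P, f x ≤ b) ∧ F = {x ∈ P | f x = b} ∧ F ≠ ∅ ∧ F ≠ P

lemma pi_repr (x : E3) : x = ∑ i, x i • (Pi.single i 1 : E3) := by
  funext j
  simp [Pi.single_apply, Finset.sum_apply, mul_comm]

lemma linearMap_eq_sum (f : E3 →ₗ[ℝ] ℝ) (x : E3) :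
    f x = ∑ i, f (Pi.single i 1) * x i := by
  conv_lhs => rw [pi_repr x]
  rw [map_sum]
  refine Finset.sum_congr rfl fun i _ => ?_
  rw [map_smul, smul_eq_mul, mul_comm]

lemma isFace_iff_isFaceL (P F : Set E3) : IsFace P F ↔ IsFaceL P F := by
  constructor
  · rintro ⟨a, b, hsupp, hF, hne, hnP⟩
    refine ⟨∑ i, a i • LinearMap.proj i, b, ?_, ?_, hne, hnP⟩
    · intro x hx
      simpa using hsupp x hx
    · rw [hF]
      ext x
      simp
  · rintro ⟨f, b, hsupp, hF, hne, hnP⟩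
    refine ⟨fun i => f (Pi.single i 1), b, ?_, ?_, hne, hnP⟩
    · intro x hx
      rw [← linearMap_eq_sum]; exact hsupp x hx
    · rw [hF]
      ext x
      rw [Set.mem_setOf_eq, Set.mem_setOf_eq, ← linearMap_eq_sum]

lemma face_eq_hull (V : Finset E3) (f : E3 →ₗ[ℝ] ℝ) (b : ℝ) (hb : ∀ v ∈ V, f v ≤ b) :
    {x ∈ convexHull ℝ (V : Set E3) | f x = b}
      = convexHull ℝ ((V.filter (fun v => f v = b) : Finset E3) : Set E3) := by
  apply Set.Subset.antisymm
  · rintro x ⟨hxP, hxb⟩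
    rw [Finset.mem_convexHull'] at hxP ⊢
    obtain ⟨w, hw0, hw1, hwx⟩ := hxP
    have key : ∀ v ∈ V, w v * (b - f v) = 0 := by
      have hsum : ∑ v ∈ V, w v * (b - f v) = 0 := by
        have : f x = ∑ v ∈ V, w v * f v := by
          rw [← hwx, map_sum]
          exact Finset.sum_congr rfl fun v _ => by rw [map_smul, smul_eq_mul]
        simp only [mul_sub, Finset.sum_sub_distrib, ← Finset.sum_mul, hw1, one_mul]
        rw [← this, hxb]
        ring
      have hnn : ∀ v ∈ V, 0 ≤ w v * (b - f v) :=
        fun v hv => mul_nonneg (hw0 v hv) (sub_nonneg.2 (hb v hv))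
      intro v hv
      exact (Finset.sum_eq_zero_iff_of_nonneg hnn).1 hsum v hv
    refine ⟨w, fun v hv => hw0 v (Finset.mem_filter.1 hv).1, ?_, ?_⟩
    · rw [← hw1]
      apply Finset.sum_subset (Finset.filter_subset _ _)
      intro v hv hnv
      rcases mul_eq_zero.1 (key v hv) with h | h
      · exact h
      · exfalso
        simp only [Finset.mem_filter, hv, true_and] at hnv
        exact hnv (by linarith [sub_eq_zero.1 h])
    · rw [← hwx]
      apply Finset.sum_subset (Finset.filter_subset _ _)
      intro v hv hnv
      rcases mul_eq_zero.1 (key v hv) with h | h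
      · rw [h, zero_smul]
      · exfalso
        simp only [Finset.mem_filter, hv, true_and] at hnv
        exact hnv (by linarith [sub_eq_zero.1 h])
  · apply convexHull_min
    · intro v hv
      rw [Finset.mem_coe, Finset.mem_filter] at hv
      exact ⟨subset_convexHull ℝ _ hv.1, hv.2⟩
    · exact Convex.inter (convex_convexHull ℝ _) (convex_hyperplane f.isLinear b)

lemma exists_minimal_hull (P : Set E3) (h : ∃ V : Finset E3, P = convexHull ℝ (V : Set E3)) :
    ∃ V : Finset E3, P = convexHull ℝ (V : Set E3) ∧
      ∀ v ∈ V, v ∉ convexHull ℝ ((V.erase v : Finset E3) : Set E3) := by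
  obtain ⟨V0, hV0⟩ := h
  set S : Set ℕ := {n | ∃ V : Finset E3, V.card = n ∧ P = convexHull ℝ (V : Set E3)} with hS
  obtain ⟨n, ⟨V, hVc, hVP⟩, hmin⟩ := wellFounded_lt.has_min S ⟨V0.card, V0, rfl, hV0⟩
  refine ⟨V, hVP, fun v hv hcon => ?_⟩
  have herase : convexHull ℝ ((V.erase v : Finset E3) : Set E3) = convexHull ℝ (V : Set E3) := by
    apply subset_antisymm (convexHull_mono (by exact_mod_cast Finset.erase_subset v V))
    apply convexHull_min _ (convex_convexHull ℝ _)
    intro u hu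
    rcases eq_or_ne u v with rfl | hne
    · exact hcon
    · exact subset_convexHull ℝ _ (by simp [Finset.mem_erase, hne, hu] : u ∈ ((V.erase v : Finset E3) : Set E3))
  have : (V.erase v).card ∈ S := ⟨V.erase v, rfl, by rw [hVP, herase]⟩
  exact hmin _ this (hVc ▸ Finset.card_erase_lt_of_mem hv)

lemma hull_not_subsingleton (V : Finset E3)
    (hdim : Module.finrank ℝ (vectorSpan ℝ (convexHull ℝ (V : Set E3))) = 3) :
    ¬ (convexHull ℝ (V : Set E3)).Subsingleton := by
  intro h
  rcases h.eq_empty_or_singleton with he | ⟨x, he⟩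
  · rw [he, vectorSpan_empty, finrank_bot] at hdim
    norm_num at hdim
  · rw [he, vectorSpan_singleton, finrank_bot] at hdim
    norm_num at hdim

lemma exposed_extreme {P : Set E3} (hconv : Convex ℝ P) {f : E3 →ₗ[ℝ] ℝ} {b : ℝ} {x : E3}
    (hsupp : ∀ y ∈ P, f y ≤ b) (hxP : x ∈ P) (hxb : f x = b)
    (hface : {y ∈ P | f y = b} ⊆ {x}) : x ∈ Set.extremePoints ℝ P := by
  rw [mem_extremePoints]
  refine ⟨hxP, fun x₁ h₁ x₂ h₂ hseg => ?_⟩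
  obtain ⟨a, c, ha, hc, hac, hx⟩ := hseg
  have hfx : a * f x₁ + c * f x₂ = b := by
    rw [← hxb, ← hx]; simp
  have hle1 := hsupp x₁ h₁
  have hle2 := hsupp x₂ h₂
  have habc : a * b + c * b = b := by rw [← add_mul, hac, one_mul]
  have hb1 : f x₁ = b := by
    by_contra hne
    have hlt : f x₁ < b := lt_of_le_of_ne hle1 hne
    linarith [mul_lt_mul_of_pos_left hlt ha, mul_le_mul_of_nonneg_left hle2 hc.le]
  have hb2 : f x₂ = b := by
    by_contra hne
    have hlt : f x₂ < b := lt_of_le_of_ne hle2 hne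
    linarith [mul_lt_mul_of_pos_left hlt hc, mul_le_mul_of_nonneg_left hle1 ha.le]
  exact ⟨hface ⟨h₁, hb1⟩, hface ⟨h₂, hb2⟩⟩

lemma vertex_face (V : Finset E3)
    (hmin : ∀ v ∈ V, v ∉ convexHull ℝ ((V.erase v : Finset E3) : Set E3))
    {v : E3} (hv : v ∈ V) :
    ∃ (f : E3 →ₗ[ℝ] ℝ) (b : ℝ), (∀ x ∈ convexHull ℝ (V : Set E3), f x ≤ b) ∧
      {x ∈ convexHull ℝ (V : Set E3) | f x = b} = {v} := by
  obtain ⟨f, u, hfu, huv⟩ := geometric_hahn_banach_closed_point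
    (convex_convexHull ℝ ((V.erase v : Finset E3) : Set E3))
    ((V.erase v).finite_toSet.isClosed_convexHull (𝕜 := ℝ)) (hmin v hv)
  set g : E3 →ₗ[ℝ] ℝ := f.toLinearMap with hg
  set b : ℝ := f v with hbdef
  have hVb : ∀ w ∈ V, g w ≤ b := by
    intro w hw
    rcases eq_or_ne w v with rfl | hne
    · exact le_refl _
    · have : w ∈ convexHull ℝ ((V.erase v : Finset E3) : Set E3) :=
        subset_convexHull ℝ _ (by simp [Finset.mem_erase, hne, hw])
      exact le_of_lt (lt_trans (hfu w this) huv)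
  have hsupp : ∀ x ∈ convexHull ℝ (V : Set E3), g x ≤ b := by
    intro x hx
    have : convexHull ℝ (V : Set E3) ⊆ {y | g y ≤ b} :=
      convexHull_min hVb (convex_halfSpace_le g.isLinear b)
    exact this hx
  refine ⟨g, b, hsupp, ?_⟩
  rw [face_eq_hull V g b hVb]
  have hfil : V.filter (fun w => g w = b) = {v} := by
    apply Finset.ext
    intro w
    simp only [Finset.mem_filter, Finset.mem_singleton]
    constructor
    · rintro ⟨hwV, hwb⟩
      by_contra hne
      have : w ∈ convexHull ℝ ((V.erase v : Finset E3) : Set E3) :=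
        subset_convexHull ℝ _ (by simp [Finset.mem_erase, hne, hwV])
      have hlt : g w < b := lt_trans (hfu w this) huv
      rw [hwb] at hlt
      exact absurd hlt (lt_irrefl b)
    · rintro rfl
      exact ⟨hv, rfl⟩
  rw [hfil]
  simp

lemma neg_mem_of_sym {P : Set E3} (hsym : -P = P) {x : E3} (hx : x ∈ P) : -x ∈ P := by
  rw [← hsym]
  simpa using hx

lemma neg_extremePoint {P : Set E3} (hsym : -P = P) {x : E3}
    (hx : x ∈ Set.extremePoints ℝ P) : -x ∈ Set.extremePoints ℝ P := by
  rw [mem_extremePoints] at hx ⊢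
  refine ⟨neg_mem_of_sym hsym hx.1, fun x₁ h₁ x₂ h₂ hseg => ?_⟩
  obtain ⟨a, c, ha, hc, hac, hx'⟩ := hseg
  have : a • (-x₁) + c • (-x₂) = x := by
    rw [smul_neg, smul_neg, ← neg_add, hx', neg_neg]
  have h := hx.2 (-x₁) (neg_mem_of_sym hsym h₁) (-x₂) (neg_mem_of_sym hsym h₂)
    ⟨a, c, ha, hc, hac, this⟩
  constructor
  · rw [← neg_neg x₁, h.1]
  · rw [← neg_neg x₂, h.2]

lemma zero_not_extremePoint {P : Set E3} (hsym : -P = P) (hns : ¬ P.Subsingleton) :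
    (0 : E3) ∉ Set.extremePoints ℝ P := by
  intro h0
  obtain ⟨p, hp, q, hq, hpq⟩ := Set.not_subsingleton_iff.1 hns
  have key : ∀ r ∈ P, r = 0 := by
    intro r hr
    rcases eq_or_ne r 0 with h | h
    · exact h
    have hseg : (0 : E3) ∈ openSegment ℝ r (-r) := by
      refine ⟨1/2, 1/2, by norm_num, by norm_num, by norm_num, ?_⟩
      rw [smul_neg, add_neg_cancel]
    exact absurd (h0.2 hr (neg_mem_of_sym hsym hr) hseg) h
  exact hpq ((key p hp).trans (key q hq).symm)

lemma extremePoints_eq_vertices (V : Finset E3)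
    (hmin : ∀ v ∈ V, v ∉ convexHull ℝ ((V.erase v : Finset E3) : Set E3)) :
    Set.extremePoints ℝ (convexHull ℝ (V : Set E3)) = (V : Set E3) := by
  apply Set.Subset.antisymm extremePoints_convexHull_subset
  intro v hv
  obtain ⟨f, b, hsupp, hface⟩ := vertex_face V hmin hv
  have hvmem : v ∈ {x ∈ convexHull ℝ (V : Set E3) | f x = b} := by rw [hface]; rfl
  exact exposed_extreme (convex_convexHull ℝ _) hsupp hvmem.1 hvmem.2 (le_of_eq hface)

lemma vectorSpan_convexHull' (s : Set E3) :
    vectorSpan ℝ (convexHull ℝ s) = vectorSpan ℝ s := by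
  rw [← direction_affineSpan, affineSpan_convexHull, direction_affineSpan]

lemma vectorSpan_le_span (s : Set E3) : vectorSpan ℝ s ≤ Submodule.span ℝ s := by
  rw [vectorSpan_def]
  rw [Submodule.span_le]
  rintro d ⟨p, hp, q, hq, rfl⟩
  exact Submodule.sub_mem _ (Submodule.subset_span hp) (Submodule.subset_span hq)

lemma finrank_E3 : Module.finrank ℝ E3 = 3 := Module.finrank_fin_fun ℝ

lemma span_V_top (V : Finset E3)
    (hdim : Module.finrank ℝ (vectorSpan ℝ (convexHull ℝ (V : Set E3))) = 3) :
    Submodule.span ℝ (V : Set E3) = ⊤ := by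
  have h1 : vectorSpan ℝ (V : Set E3) ≤ Submodule.span ℝ (V : Set E3) := vectorSpan_le_span _
  have h2 : Module.finrank ℝ (vectorSpan ℝ (V : Set E3)) = 3 := by
    rw [← vectorSpan_convexHull']; exact hdim
  have h3 : 3 ≤ Module.finrank ℝ (Submodule.span ℝ (V : Set E3)) := by
    have h5 := Submodule.finrank_mono (M := E3) h1
    rw [h2] at h5
    exact h5
  apply Submodule.eq_top_of_finrank_eq
  have h4 := Submodule.finrank_le (Submodule.span ℝ (V : Set E3))
  rw [finrank_E3] at h4 ⊢
  omega

lemma extract_pairs (V : Finset E3) (hcard : V.card = 6) (hsymm : ∀ v ∈ V, -v ∈ V)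
    (hnf : ∀ v ∈ V, v ≠ -v) :
    ∃ v : Fin 3 → E3, (V : Set E3) = (Set.range v) ∪ (Set.range (fun i => -(v i))) := by
  -- peel three antipodal pairs
  have peel : ∀ W : Finset E3, (∀ v ∈ W, -v ∈ W) → (∀ v ∈ W, v ≠ -v) → W.Nonempty →
      ∃ w, w ∈ W ∧ ((W.erase w).erase (-w)).card + 2 = W.card ∧
        (∀ v ∈ (W.erase w).erase (-w), -v ∈ (W.erase w).erase (-w)) ∧
        (W : Set E3) = {w, -w} ∪ ((W.erase w).erase (-w) : Set E3) := by
    intro W hs hn hne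
    obtain ⟨w, hw⟩ := hne
    have hnw : -w ∈ W.erase w := Finset.mem_erase.2 ⟨fun h => hn w hw h.symm, hs w hw⟩
    refine ⟨w, hw, ?_, ?_, ?_⟩
    · have e1 : (W.erase w).card = W.card - 1 := Finset.card_erase_of_mem hw
      have e2 : ((W.erase w).erase (-w)).card = (W.erase w).card - 1 :=
        Finset.card_erase_of_mem hnw
      have p1 : 1 ≤ (W.erase w).card := Finset.card_pos.2 ⟨-w, hnw⟩
      have p0 : 1 ≤ W.card := Finset.card_pos.2 ⟨w, hw⟩
      omega
    · intro v hv
      rw [Finset.mem_erase, Finset.mem_erase] at hv ⊢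
      obtain ⟨hv1, hv2, hv3⟩ := hv
      refine ⟨fun h => hv2 (neg_injective h), fun h => hv1 (by rw [← h, neg_neg]), hs v hv3⟩
    · ext u
      simp only [Finset.coe_erase, Set.mem_union, Set.mem_insert_iff, Set.mem_singleton_iff,
        Set.mem_diff, Finset.mem_coe, Set.mem_singleton_iff]
      constructor
      · intro hu
        rcases eq_or_ne u w with rfl | h1
        · exact Or.inl (Or.inl rfl)
        rcases eq_or_ne u (-w) with rfl | h2
        · exact Or.inl (Or.inr rfl)
        · exact Or.inr (by simp [Finset.mem_erase, h1, h2, hu])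
      · rintro ((rfl | rfl) | hu)
        · exact hw
        · exact hs w hw
        · exact hu.1.1
  obtain ⟨v0, hv0, hc1, hs1, hcov1⟩ := peel V hsymm hnf (Finset.card_pos.1 (by omega))
  set V1 := (V.erase v0).erase (-v0) with hV1
  have hn1 : ∀ v ∈ V1, v ≠ -v :=
    fun v hv => hnf v (Finset.mem_erase.1 (Finset.mem_erase.1 hv).2).2
  obtain ⟨w1, hw1, hc2, hs2, hcov2⟩ := peel V1 hs1 hn1 (Finset.card_pos.1 (by omega))
  set V2 := (V1.erase w1).erase (-w1) with hV2
  have hn2 : ∀ v ∈ V2, v ≠ -v :=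
    fun v hv => hn1 v (Finset.mem_erase.1 (Finset.mem_erase.1 hv).2).2
  obtain ⟨w2, hw2, hc3, hs3, hcov3⟩ := peel V2 hs2 hn2 (Finset.card_pos.1 (by omega))
  set V3 := (V2.erase w2).erase (-w2) with hV3
  have hV3e : V3 = ∅ := Finset.card_eq_zero.1 (by omega)
  refine ⟨![v0, w1, w2], ?_⟩
  rw [hcov1, hcov2, hcov3, hV3e]
  ext x
  simp only [Finset.coe_empty, Set.union_empty, Set.mem_union, Set.mem_insert_iff,
    Set.mem_singleton_iff, Set.mem_range]
  constructor
  · rintro ((rfl | rfl) | (rfl | rfl) | (rfl | rfl))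
    · exact Or.inl ⟨0, rfl⟩
    · exact Or.inr ⟨0, rfl⟩
    · exact Or.inl ⟨1, rfl⟩
    · exact Or.inr ⟨1, rfl⟩
    · exact Or.inl ⟨2, rfl⟩
    · exact Or.inr ⟨2, rfl⟩
  · rintro (⟨i, rfl⟩ | ⟨i, rfl⟩) <;> fin_cases i <;> simp

noncomputable def sgn (s : Bool) : ℝ := if s then 1 else -1

lemma sgn_true : sgn true = 1 := rfl
lemma sgn_false : sgn false = -1 := rfl
lemma sgn_ne_zero (s : Bool) : sgn s ≠ 0 := by cases s <;> simp [sgn]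

lemma sgn_mul_self (s : Bool) : sgn s * sgn s = 1 := by cases s <;> simp [sgn]

lemma sgn_le_one (s : Bool) : sgn s ≤ 1 := by cases s <;> simp [sgn] <;> norm_num

lemma neg_sgn (s : Bool) : -sgn s = sgn (!s) := by cases s <;> simp [sgn]

lemma sgn_mul_sgn_le_one (s t : Bool) : sgn s * sgn t ≤ 1 := by
  cases s <;> cases t <;> simp [sgn] <;> norm_num

lemma sgn_mul_sgn_eq_one (s t : Bool) : sgn s * sgn t = 1 ↔ s = t := by
  cases s <;> cases t <;> simp [sgn] <;> norm_num

lemma sgn_inj {s t : Bool} (h : sgn s = sgn t) : s = t := by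
  cases s <;> cases t <;> simp [sgn] at h ⊢ <;> norm_num at h

noncomputable def fsig (B : Module.Basis (Fin 3) ℝ E3) (σ : Fin 3 → Bool) : E3 →ₗ[ℝ] ℝ :=
  ∑ i, sgn (σ i) • (B.coord i)

lemma fsig_apply (B : Module.Basis (Fin 3) ℝ E3) (σ : Fin 3 → Bool) (x : E3) :
    fsig B σ x = ∑ i, sgn (σ i) * B.coord i x := by
  simp [fsig]

lemma coord_smul_basis (B : Module.Basis (Fin 3) ℝ E3) (i j : Fin 3) (c : ℝ) :
    B.coord i (c • B j) = if j = i then c else 0 := by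
  rw [map_smul, Module.Basis.coord_apply, Module.Basis.repr_self, smul_eq_mul, Finsupp.single_apply]
  split <;> simp

lemma fsig_smul_basis (B : Module.Basis (Fin 3) ℝ E3) (σ : Fin 3 → Bool) (s : Bool) (j : Fin 3) :
    fsig B σ (sgn s • B j) = sgn s * sgn (σ j) := by
  rw [fsig_apply]
  rw [Finset.sum_eq_single j]
  · rw [coord_smul_basis]; simp [mul_comm]
  · intro i _ hij
    rw [coord_smul_basis]
    simp [Ne.symm hij]
  · simp

lemma smul_basis_inj (B : Module.Basis (Fin 3) ℝ E3) {s t : Bool} {i j : Fin 3}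
    (h : sgn s • B i = sgn t • B j) : s = t ∧ i = j := by
  have h1 := congrArg (B.coord i) h
  rw [coord_smul_basis, coord_smul_basis] at h1
  simp only [if_pos rfl] at h1
  rcases eq_or_ne j i with rfl | hij
  · simp at h1
    exact ⟨sgn_inj h1, rfl⟩
  · rw [if_neg hij] at h1
    exact absurd h1 (sgn_ne_zero s)

noncomputable def Ssig (B : Module.Basis (Fin 3) ℝ E3) (σ : Fin 3 → Bool) : Finset E3 :=
  Finset.image (fun i => sgn (σ i) • B i) Finset.univ

lemma mem_Ssig {B : Module.Basis (Fin 3) ℝ E3} {σ : Fin 3 → Bool} {u : E3} :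
    u ∈ Ssig B σ ↔ ∃ i, u = sgn (σ i) • B i := by
  simp [Ssig, eq_comm]

lemma Ssig_card (B : Module.Basis (Fin 3) ℝ E3) (σ : Fin 3 → Bool) : (Ssig B σ).card = 3 := by
  rw [Ssig, Finset.card_image_of_injective _ (fun i j hij => (smul_basis_inj B hij).2)]
  simp

section
variable {B : Module.Basis (Fin 3) ℝ E3} {V : Finset E3}
  (hcov : (V : Set E3) = Set.range (⇑B) ∪ Set.range (fun i => -(B i)))

include hcov

lemma mem_V_iff {u : E3} : u ∈ V ↔ ∃ i s, u = sgn s • B i := by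
  constructor
  · intro hu
    have : u ∈ (V : Set E3) := hu
    rw [hcov] at this
    rcases this with ⟨i, rfl⟩ | ⟨i, rfl⟩
    · exact ⟨i, true, by simp [sgn]⟩
    · exact ⟨i, false, by simp [sgn]⟩
  · rintro ⟨i, s, rfl⟩
    have : sgn s • B i ∈ (V : Set E3) := by
      rw [hcov]
      cases s
      · exact Or.inr ⟨i, by simp [sgn]⟩
      · exact Or.inl ⟨i, by simp [sgn]⟩
    exact this

lemma Ssig_subset_V (σ : Fin 3 → Bool) : Ssig B σ ⊆ V := by
  intro u hu
  obtain ⟨i, rfl⟩ := mem_Ssig.1 hu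
  exact (mem_V_iff hcov).2 ⟨i, σ i, rfl⟩

lemma fsig_supp (σ : Fin 3 → Bool) : ∀ u ∈ V, fsig B σ u ≤ 1 := by
  intro u hu
  obtain ⟨i, s, rfl⟩ := (mem_V_iff hcov).1 hu
  rw [fsig_smul_basis]
  exact sgn_mul_sgn_le_one s (σ i)

lemma filter_eq_Ssig (σ : Fin 3 → Bool) :
    V.filter (fun u => fsig B σ u = 1) = Ssig B σ := by
  ext u
  rw [Finset.mem_filter, mem_Ssig]
  constructor
  · rintro ⟨hu, h1⟩
    obtain ⟨i, s, rfl⟩ := (mem_V_iff hcov).1 hu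
    rw [fsig_smul_basis, sgn_mul_sgn_eq_one] at h1
    exact ⟨i, by rw [h1]⟩
  · rintro ⟨i, rfl⟩
    refine ⟨Ssig_subset_V hcov σ (mem_Ssig.2 ⟨i, rfl⟩), ?_⟩
    rw [fsig_smul_basis]
    exact sgn_mul_self _

end

lemma finrank_ker_fsig (B : Module.Basis (Fin 3) ℝ E3) (σ : Fin 3 → Bool) :
    Module.finrank ℝ (LinearMap.ker (fsig B σ)) = 2 := by
  have hsurj : LinearMap.range (fsig B σ) = ⊤ := by
    rw [LinearMap.range_eq_top]
    intro c
    refine ⟨c • (sgn (σ 0) • B 0), ?_⟩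
    rw [map_smul, fsig_smul_basis, sgn_mul_self, smul_eq_mul, mul_one]
  have h := LinearMap.finrank_range_add_finrank_ker (fsig B σ)
  rw [hsurj, finrank_top] at h
  simp only [Module.finrank_self] at h
  have : Module.finrank ℝ E3 = 3 := Module.finrank_fin_fun ℝ
  omega

lemma vectorSpan_le_ker (f : E3 →ₗ[ℝ] ℝ) (b : ℝ) (s : Set E3) (hs : ∀ x ∈ s, f x = b) :
    vectorSpan ℝ s ≤ LinearMap.ker f := by
  rw [vectorSpan_def, Submodule.span_le]
  rintro d ⟨p, hp, q, hq, rfl⟩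
  simp only [SetLike.mem_coe, LinearMap.mem_ker]
  show f (p - q) = 0
  rw [map_sub, hs p hp, hs q hq, sub_self]

lemma two_le_dim_Ssig (B : Module.Basis (Fin 3) ℝ E3) (σ : Fin 3 → Bool) :
    2 ≤ Module.finrank ℝ (vectorSpan ℝ ((Ssig B σ : Finset E3) : Set E3)) := by
  set d : Fin 2 → E3 := ![sgn (σ 1) • B 1 - sgn (σ 0) • B 0, sgn (σ 2) • B 2 - sgn (σ 0) • B 0]
    with hd
  have hdmem : ∀ k, d k ∈ vectorSpan ℝ ((Ssig B σ : Finset E3) : Set E3) := by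
    intro k
    have h0 : (sgn (σ 0) • B 0 : E3) ∈ (Ssig B σ : Set E3) := mem_Ssig.2 ⟨0, rfl⟩
    have h1 : (sgn (σ 1) • B 1 : E3) ∈ (Ssig B σ : Set E3) := mem_Ssig.2 ⟨1, rfl⟩
    have h2 : (sgn (σ 2) • B 2 : E3) ∈ (Ssig B σ : Set E3) := mem_Ssig.2 ⟨2, rfl⟩
    fin_cases k
    · exact vsub_mem_vectorSpan ℝ h1 h0
    · exact vsub_mem_vectorSpan ℝ h2 h0
  have hli : LinearIndependent ℝ d := by
    rw [LinearIndependent.pair_iff]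
    intro s t hst
    have e1 := congrArg (B.coord 1) hst
    have e2 := congrArg (B.coord 2) hst
    simp only [hd, Matrix.cons_val_zero, Matrix.cons_val_one, Matrix.head_cons,
      map_add, map_smul, map_sub, coord_smul_basis, map_zero, smul_eq_mul] at e1 e2
    norm_num [Fin.ext_iff] at e1 e2
    constructor
    · rcases e1 with h | h
      · exact h
      · exact absurd h (sgn_ne_zero _)
    · rcases e2 with h | h
      · exact h
      · exact absurd h (sgn_ne_zero _)
  have hspan : Submodule.span ℝ (Set.range d) ≤ vectorSpan ℝ ((Ssig B σ : Finset E3) : Set E3) := by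
    rw [Submodule.span_le]
    rintro x ⟨k, rfl⟩
    exact hdmem k
  have := Submodule.finrank_mono hspan
  rw [finrank_span_eq_card hli] at this
  simpa using this

lemma face2_classify {V : Finset E3} {B : Module.Basis (Fin 3) ℝ E3}
    (hcov : (V : Set E3) = Set.range (⇑B) ∪ Set.range (fun i => -(B i)))
    (hnegP : ∀ x ∈ convexHull ℝ (V : Set E3), -x ∈ convexHull ℝ (V : Set E3))
    {F : Set E3} (hF : IsFaceL (convexHull ℝ (V : Set E3)) F) (hdF : faceDim F = 2) :
    ∃ σ : Fin 3 → Bool, F = convexHull ℝ ((Ssig B σ : Finset E3) : Set E3) := by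
  classical
  obtain ⟨f, b, hsupp, hFeq, hne, hnP⟩ := hF
  have hVb : ∀ u ∈ V, f u ≤ b := fun u hu => hsupp u (subset_convexHull ℝ _ hu)
  set S : Finset E3 := V.filter (fun v => f v = b) with hSdef
  have hFhull : F = convexHull ℝ (S : Set E3) := by rw [hFeq, face_eq_hull V f b hVb]
  have hSV : S ⊆ V := Finset.filter_subset _ _
  -- no antipodal pair in S
  have hpair : ∀ u, u ∈ S → -u ∉ S := by
    intro u huS hnuS
    have hub : f u = b := (Finset.mem_filter.1 huS).2
    have hnub : f (-u) = b := (Finset.mem_filter.1 hnuS).2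
    rw [map_neg, hub] at hnub
    have hb0 : b = 0 := by linarith
    apply hnP
    rw [hFeq]
    ext x
    simp only [Set.mem_setOf_eq]
    constructor
    · exact fun h => h.1
    · intro hx
      refine ⟨hx, le_antisymm (hsupp x hx) ?_⟩
      have h2 := hsupp (-x) (hnegP x hx)
      rw [map_neg] at h2
      rw [hb0] at h2 ⊢
      linarith
  set σ : Fin 3 → Bool := fun i => decide (B i ∈ S) with hσ
  have hsub : S ⊆ Ssig B σ := by
    intro u huS
    obtain ⟨i, s, rfl⟩ := (mem_V_iff hcov).1 (hSV huS)
    rw [mem_Ssig]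
    refine ⟨i, ?_⟩
    cases s
    · -- u = -(B i)
      have hBi : B i ∉ S := by
        intro hBiS
        exact hpair (B i) hBiS (by simpa [sgn_false, neg_one_smul] using huS)
      have : σ i = false := by simp [hσ, hBi]
      rw [this]
    · have hBi : B i ∈ S := by simpa [sgn_true, one_smul] using huS
      have : σ i = true := by simp [hσ, hBi]
      rw [this]
  -- S has at least 3 elements since F is 2-dimensional
  have hdS : Module.finrank ℝ (vectorSpan ℝ (S : Set E3)) = 2 := by
    rw [← vectorSpan_convexHull', ← hFhull]
    exact hdF
  have hcard : 3 ≤ S.card := by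
    by_contra hlt
    push_neg at hlt
    interval_cases hc : S.card
    · rw [Finset.card_eq_zero.1 hc] at hdS
      rw [Finset.coe_empty, vectorSpan_empty, finrank_bot] at hdS
      norm_num at hdS
    · obtain ⟨x, hx⟩ := Finset.card_eq_one.1 hc
      rw [hx] at hdS
      rw [Finset.coe_singleton, vectorSpan_singleton, finrank_bot] at hdS
      norm_num at hdS
    · obtain ⟨x, y, hxy, hx⟩ := Finset.card_eq_two.1 hc
      rw [hx] at hdS
      have : ((({x, y} : Finset E3) : Set E3)) = ({x, y} : Set E3) := by simp
      rw [this, vectorSpan_pair] at hdS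
      rcases eq_or_ne (x -ᵥ y) 0 with h0 | h0
      · rw [h0, Submodule.span_zero_singleton, finrank_bot] at hdS
        norm_num at hdS
      · rw [finrank_span_singleton h0] at hdS
        norm_num at hdS
  have hSeq : S = Ssig B σ := Finset.eq_of_subset_of_card_le hsub (by rw [Ssig_card]; exact hcard)
  exact ⟨σ, by rw [hFhull, hSeq]⟩

lemma extremePoints_subhull {V T : Finset E3} (hTV : T ⊆ V)
    (hText : (T : Set E3) ⊆ Set.extremePoints ℝ (convexHull ℝ (V : Set E3))) :
    Set.extremePoints ℝ (convexHull ℝ (T : Set E3)) = (T : Set E3) := by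
  have hmono : convexHull ℝ (T : Set E3) ⊆ convexHull ℝ (V : Set E3) :=
    convexHull_mono (by exact_mod_cast hTV)
  apply subset_antisymm extremePoints_convexHull_subset
  intro u huT
  have huP := hText huT
  rw [mem_extremePoints] at huP ⊢
  exact ⟨subset_convexHull ℝ _ huT,
    fun x₁ h₁ x₂ h₂ hseg => huP.2 x₁ (hmono h₁) x₂ (hmono h₂) hseg⟩

lemma facet_isface {V : Finset E3} {B : Module.Basis (Fin 3) ℝ E3}
    (hcov : (V : Set E3) = Set.range (⇑B) ∪ Set.range (fun i => -(B i)))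
    (σ : Fin 3 → Bool) :
    IsFaceL (convexHull ℝ (V : Set E3)) (convexHull ℝ ((Ssig B σ : Finset E3) : Set E3)) ∧
      faceDim (convexHull ℝ ((Ssig B σ : Finset E3) : Set E3)) = 2 := by
  have hsupp : ∀ x ∈ convexHull ℝ (V : Set E3), fsig B σ x ≤ 1 := by
    intro x hx
    have h := convexHull_min (fun u hu => fsig_supp hcov σ u hu)
      (convex_halfSpace_le (fsig B σ).isLinear 1)
    exact h hx
  have hfeq : {x ∈ convexHull ℝ (V : Set E3) | fsig B σ x = 1}
      = convexHull ℝ ((Ssig B σ : Finset E3) : Set E3) := by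
    rw [face_eq_hull V _ 1 (fun u hu => fsig_supp hcov σ u hu), filter_eq_Ssig hcov σ]
  have hS1 : ∀ x ∈ ((Ssig B σ : Finset E3) : Set E3), fsig B σ x = 1 := by
    intro x hx
    obtain ⟨i, rfl⟩ := mem_Ssig.1 (by exact_mod_cast hx)
    rw [fsig_smul_basis]
    exact sgn_mul_self _
  have hmem0 : (sgn (σ 0) • B 0 : E3) ∈ convexHull ℝ ((Ssig B σ : Finset E3) : Set E3) :=
    subset_convexHull ℝ _ (by exact_mod_cast mem_Ssig.2 ⟨0, rfl⟩)
  constructor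
  · refine ⟨fsig B σ, 1, hsupp, hfeq.symm, ?_, ?_⟩
    · exact Set.Nonempty.ne_empty ⟨_, hmem0⟩
    · intro hFP
      set w : E3 := -(sgn (σ 0) • B 0) with hw
      have hwV : w ∈ V := by
        rw [mem_V_iff hcov]
        refine ⟨0, !(σ 0), ?_⟩
        cases h : σ 0 <;> simp [hw, h, sgn] <;> norm_num
      have hwP : w ∈ convexHull ℝ (V : Set E3) := subset_convexHull ℝ _ hwV
      have hwF : w ∈ convexHull ℝ ((Ssig B σ : Finset E3) : Set E3) := hFP ▸ hwP
      rw [← hfeq] at hwF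
      have h1 : fsig B σ w = 1 := hwF.2
      have h2 : fsig B σ w = -1 := by
        rw [hw, map_neg, fsig_smul_basis, sgn_mul_self]
      rw [h2] at h1
      norm_num at h1
  · apply le_antisymm
    · show Module.finrank ℝ (vectorSpan ℝ (convexHull ℝ ((Ssig B σ : Finset E3) : Set E3))) ≤ 2
      rw [vectorSpan_convexHull']
      have hle := vectorSpan_le_ker (fsig B σ) 1 _ hS1
      have := Submodule.finrank_mono (M := E3) hle
      rw [finrank_ker_fsig] at this
      exact this
    · show 2 ≤ Module.finrank ℝ (vectorSpan ℝ (convexHull ℝ ((Ssig B σ : Finset E3) : Set E3)))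
      rw [vectorSpan_convexHull']
      exact two_le_dim_Ssig B σ

lemma face0_classify {V : Finset E3}
    (hmin : ∀ v ∈ V, v ∉ convexHull ℝ ((V.erase v : Finset E3) : Set E3))
    (hdim : Module.finrank ℝ (vectorSpan ℝ (convexHull ℝ (V : Set E3))) = 3) :
    {F : Set E3 | IsFaceL (convexHull ℝ (V : Set E3)) F ∧ faceDim F = 0}
      = (fun v => ({v} : Set E3)) '' (V : Set E3) := by
  apply Set.Subset.antisymm
  · rintro F ⟨⟨f, b, hsupp, hFeq, hne, hnP⟩, hd0⟩
    have hVb : ∀ u ∈ V, f u ≤ b := fun u hu => hsupp u (subset_convexHull ℝ _ hu)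
    have hFhull : F = convexHull ℝ ((V.filter (fun v => f v = b) : Finset E3) : Set E3) := by
      rw [hFeq, face_eq_hull V f b hVb]
    have hsub : F.Subsingleton := by
      have hbot : vectorSpan ℝ F = ⊥ := by
        have : Module.finrank ℝ (vectorSpan ℝ F) = 0 := hd0
        exact Submodule.finrank_eq_zero.1 this
      intro y hy z hz
      have : y -ᵥ z ∈ vectorSpan ℝ F := vsub_mem_vectorSpan ℝ hy hz
      rw [hbot, Submodule.mem_bot] at this
      exact sub_eq_zero.1 this
    have hSne : (V.filter (fun v => f v = b)).Nonempty := by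
      rw [Finset.nonempty_iff_ne_empty]
      intro h
      rw [h] at hFhull
      simp only [Finset.coe_empty, convexHull_empty] at hFhull
      exact hne hFhull
    obtain ⟨v, hv⟩ := hSne
    have hvF : v ∈ F := by
      rw [hFhull]
      exact subset_convexHull ℝ _ (by exact_mod_cast hv)
    refine ⟨v, by exact_mod_cast (Finset.filter_subset _ _ hv), ?_⟩
    ext y
    simp only [Set.mem_singleton_iff]
    constructor
    · rintro rfl
      exact hvF
    · intro hy
      exact hsub hy hvF
  · rintro F ⟨v, hv, rfl⟩
    obtain ⟨f, b, hsupp, heq⟩ := vertex_face V hmin (by exact_mod_cast hv)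
    refine ⟨⟨f, b, hsupp, heq.symm, ?_, ?_⟩, ?_⟩
    · exact Set.Nonempty.ne_empty ⟨v, rfl⟩
    · intro h
      exact hull_not_subsingleton V hdim (h ▸ Set.subsingleton_singleton)
    · show Module.finrank ℝ (vectorSpan ℝ ({v} : Set E3)) = 0
      rw [vectorSpan_singleton, finrank_bot]

/-- A centrally symmetric 3-polytope with 6 vertices is simplicial and has 8
facets; in particular there is no centrally symmetric 3-polytope with
f-vector (6,6). -/
theorem centrally_symmetric_six_vertices_simplicial (P : Set (Fin 3 → ℝ))
    (hP : IsPolytope3 P) (hsym : -P = P) (h0 : fVec P 0 = 6) :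
    (∀ F : Set (Fin 3 → ℝ), IsFace P F → faceDim F = 2 →
        (Set.extremePoints ℝ F).ncard = 3) ∧ fVec P 2 = 8 := by
  classical
  obtain ⟨hEx, hdim⟩ := hP
  obtain ⟨V, hPV, hmin⟩ := exists_minimal_hull P hEx
  subst hPV
  have hfaces : ∀ i, {F : Set E3 | IsFace (convexHull ℝ (V : Set E3)) F ∧ faceDim F = i}
      = {F : Set E3 | IsFaceL (convexHull ℝ (V : Set E3)) F ∧ faceDim F = i} := by
    intro i
    ext F
    rw [Set.mem_setOf_eq, Set.mem_setOf_eq, isFace_iff_isFaceL]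
  have h6 : V.card = 6 := by
    unfold fVec at h0
    rw [hfaces 0, face0_classify hmin hdim,
      Set.ncard_image_of_injective _ Set.singleton_injective, Set.ncard_coe_finset] at h0
    exact h0
  have hext := extremePoints_eq_vertices V hmin
  have hnegP : ∀ x ∈ convexHull ℝ (V : Set E3), -x ∈ convexHull ℝ (V : Set E3) :=
    fun x hx => neg_mem_of_sym hsym hx
  have hsymV : ∀ u ∈ V, -u ∈ V := by
    intro u hu
    have h1 : u ∈ Set.extremePoints ℝ (convexHull ℝ (V : Set E3)) := by
      rw [hext]; exact_mod_cast hu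
    have h2 := neg_extremePoint hsym h1
    rw [hext] at h2
    exact_mod_cast h2
  have hnf : ∀ u ∈ V, u ≠ -u := by
    intro u hu h
    have hu0 : u = 0 := by
      have h2 : (2 : ℝ) • u = 0 := by
        rw [two_smul]
        nth_rewrite 2 [h]
        exact add_neg_cancel u
      exact (smul_eq_zero.1 h2).resolve_left (by norm_num)
    have h0ext : (0 : E3) ∈ Set.extremePoints ℝ (convexHull ℝ (V : Set E3)) := by
      rw [hext, ← hu0]
      exact_mod_cast hu
    exact zero_not_extremePoint hsym (hull_not_subsingleton V hdim) h0ext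
  obtain ⟨v, hcov0⟩ := extract_pairs V h6 hsymV hnf
  have hspan : Submodule.span ℝ (Set.range v) = ⊤ := by
    have h := span_V_top V hdim
    rw [hcov0, Submodule.span_union] at h
    have hneg : Submodule.span ℝ (Set.range fun i => -(v i)) ≤ Submodule.span ℝ (Set.range v) := by
      rw [Submodule.span_le]
      rintro x ⟨i, rfl⟩
      exact Submodule.neg_mem _ (Submodule.subset_span ⟨i, rfl⟩)
    apply eq_top_iff.2
    rw [← h]
    exact sup_le le_rfl hneg
  have hli : LinearIndependent ℝ v :=
    linearIndependent_of_top_le_span_of_card_eq_finrank hspan.ge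
      (by rw [finrank_E3]; simp)
  set B : Module.Basis (Fin 3) ℝ E3 := Module.Basis.mk hli hspan.ge with hBdef
  have hB : ⇑B = v := Module.Basis.coe_mk _ _
  have hcov : (V : Set E3) = Set.range (⇑B) ∪ Set.range (fun i => -(B i)) := by
    simp only [hB]
    exact hcov0
  have hVext : (V : Set E3) ⊆ Set.extremePoints ℝ (convexHull ℝ (V : Set E3)) := le_of_eq hext.symm
  have hText : ∀ σ : Fin 3 → Bool,
      ((Ssig B σ : Finset E3) : Set E3) ⊆ Set.extremePoints ℝ (convexHull ℝ (V : Set E3)) := by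
    intro σ u hu
    exact hVext (by exact_mod_cast (Ssig_subset_V hcov σ) (by exact_mod_cast hu))
  have concl1 : ∀ F : Set E3, IsFace (convexHull ℝ (V : Set E3)) F → faceDim F = 2 →
      (Set.extremePoints ℝ F).ncard = 3 := by
    intro F hF hd2
    rw [isFace_iff_isFaceL] at hF
    obtain ⟨σ, rfl⟩ := face2_classify hcov hnegP hF hd2
    rw [extremePoints_subhull (Ssig_subset_V hcov σ) (hText σ), Set.ncard_coe_finset, Ssig_card]
  refine ⟨concl1, ?_⟩
  have h2 : {F : Set E3 | IsFaceL (convexHull ℝ (V : Set E3)) F ∧ faceDim F = 2}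
      = (fun σ : Fin 3 → Bool =>
          convexHull ℝ ((Ssig B σ : Finset E3) : Set E3)) '' Set.univ := by
    ext F
    simp only [Set.mem_setOf_eq, Set.mem_image, Set.mem_univ, true_and]
    constructor
    · rintro ⟨hF, hd⟩
      obtain ⟨σ, rfl⟩ := face2_classify hcov hnegP hF hd
      exact ⟨σ, rfl⟩
    · rintro ⟨σ, rfl⟩
      exact facet_isface hcov σ
  have hginj : Function.Injective
      (fun σ : Fin 3 → Bool => convexHull ℝ ((Ssig B σ : Finset E3) : Set E3)) := by
    intro σ τ h
    have hS : ((Ssig B σ : Finset E3) : Set E3) = ((Ssig B τ : Finset E3) : Set E3) := by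
      rw [← extremePoints_subhull (Ssig_subset_V hcov σ) (hText σ),
        ← extremePoints_subhull (Ssig_subset_V hcov τ) (hText τ)]
      simp only at h
      rw [h]
    have hSS : Ssig B σ = Ssig B τ := Finset.coe_injective hS
    funext i
    have hmem : sgn (σ i) • B i ∈ Ssig B τ := by
      rw [← hSS]
      exact mem_Ssig.2 ⟨i, rfl⟩
    obtain ⟨j, hj⟩ := mem_Ssig.1 hmem
    obtain ⟨hst, hij⟩ := smul_basis_inj B hj
    rw [hst, hij]
  unfold fVec
  rw [hfaces 2, h2, Set.ncard_image_of_injective _ hginj, Set.ncard_univ]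
  simp [Nat.card_eq_fintype_card]
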